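/- Let n ≥ 3 and let A_n be the adjacency matrix of the dihedral graph D_n. The map a ↦ (a_0, a_1) is an injective group homomorphism from ker(1 − A_n^t) to ℤ². If 6 divides n, this map is an isomorphism of ker(1 − A_n^t) onto ℤ²; if 6 does not divide n, then ker(1 − A_n^t) = 0. -/
import Mathlib


/-- The vertex adjacency matrix of the dihedral graph `D_n`:
`A_n(i,j) = 1` if `j = i + 1` or `j = i - 1` (mod `n`), and `0` otherwise. -/
noncomputable def dihedralAdj (n : ℕ) : Matrix (ZMod n) (ZMod n) ℤ :=
  Matrix.of fun i j => if j = i + 1 ∨ j = i - 1 then 1 else 0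

/-- The endomorphism `1 - A_n^t` of `ℤ^{ℤ/nℤ}`. -/
noncomputable def dihedralD (n : ℕ) [NeZero n] : (ZMod n → ℤ) →ₗ[ℤ] (ZMod n → ℤ) :=
  Matrix.mulVecLin (1 - (dihedralAdj n).transpose)

lemma dihedral_mem_ker_iff (n : ℕ) (hn : 3 ≤ n) [NeZero n] (a : ZMod n → ℤ) :
    a ∈ LinearMap.ker (dihedralD n) ↔ ∀ i, a i = a (i - 1) + a (i + 1) := by
  have h2 : ∀ i : ZMod n, i - 1 ≠ i + 1 := by
    intro i h
    have hc : ((2 : ℕ) : ZMod n) = 0 := by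
      have h0 : (i + -1 : ZMod n) = i + 1 := by rw [← h]; ring
      have h1 : (-1 : ZMod n) = 1 := add_left_cancel h0
      push_cast
      linear_combination -h1
    rw [ZMod.natCast_eq_zero_iff] at hc
    have := Nat.le_of_dvd (by norm_num) hc
    omega
  have key : ∀ i, ((dihedralAdj n).transpose.mulVec a) i = a (i - 1) + a (i + 1) := by
    intro i
    rw [Matrix.mulVec, dotProduct]
    have hpt : ∀ j : ZMod n, (dihedralAdj n).transpose i j * a j
        = (if j = i - 1 then a j else 0) + (if j = i + 1 then a j else 0) := by
      intro j
      simp only [Matrix.transpose_apply, dihedralAdj, Matrix.of_apply]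
      have e1 : (i = j + 1) ↔ (j = i - 1) := by
        constructor
        · intro h; subst h; ring
        · intro h; subst h; ring
      have e2 : (i = j - 1) ↔ (j = i + 1) := by
        constructor
        · intro h; subst h; ring
        · intro h; subst h; ring
      simp only [e1, e2]
      by_cases hj1 : j = i - 1 <;> by_cases hj2 : j = i + 1 <;> simp_all
      exact absurd hj1.symm (h2 i)
    rw [Finset.sum_congr rfl (fun j _ => hpt j), Finset.sum_add_distrib]
    simp
  constructor
  · intro h i
    have := congrFun (LinearMap.mem_ker.mp h) i
    simp only [dihedralD, Matrix.mulVecLin_apply, Matrix.sub_mulVec, Matrix.one_mulVec,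
      Pi.sub_apply, Pi.zero_apply, key] at this
    linarith
  · intro h
    rw [LinearMap.mem_ker]
    funext i
    simp only [dihedralD, Matrix.mulVecLin_apply, Matrix.sub_mulVec, Matrix.one_mulVec,
      Pi.sub_apply, Pi.zero_apply, key]
    linarith [h i]

/-- The sequence x, y, y-x, -x, -y, x-y, x, y, ... -/
def dihedralSeq (x y : ℤ) : ℕ → ℤ
  | 0 => x
  | 1 => y
  | (k + 2) => dihedralSeq x y (k + 1) - dihedralSeq x y k

lemma dihedralSeq_period (x y : ℤ) (k : ℕ) :
    dihedralSeq x y (k + 6) = dihedralSeq x y k := by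
  have H : ∀ k, dihedralSeq x y (k + 6) = dihedralSeq x y k ∧
      dihedralSeq x y (k + 7) = dihedralSeq x y (k + 1) := by
    intro k
    induction k with
    | zero => constructor <;> simp [dihedralSeq]
    | succ m ih =>
      refine ⟨ih.2, ?_⟩
      have e1 : dihedralSeq x y (m + 8) = dihedralSeq x y (m + 7) - dihedralSeq x y (m + 6) := rfl
      have e2 : dihedralSeq x y (m + 2) = dihedralSeq x y (m + 1) - dihedralSeq x y m := rfl
      show dihedralSeq x y (m + 8) = dihedralSeq x y (m + 2)
      rw [e1, e2, ih.1, ih.2]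
  exact (H k).1

lemma dihedralSeq_mod (x y : ℤ) (k : ℕ) :
    dihedralSeq x y k = dihedralSeq x y (k % 6) := by
  conv_lhs => rw [← Nat.div_add_mod k 6]
  generalize k % 6 = r
  generalize k / 6 = q
  induction q with
  | zero => simp
  | succ m ih => rw [show 6 * (m+1) + r = (6 * m + r) + 6 by ring, dihedralSeq_period, ih]

lemma dihedralSeq_zero (k : ℕ) : dihedralSeq 0 0 k = 0 := by
  have H : ∀ k, dihedralSeq 0 0 k = 0 ∧ dihedralSeq 0 0 (k+1) = 0 := by
    intro k
    induction k with
    | zero => exact ⟨rfl, rfl⟩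
    | succ m ih =>
      refine ⟨ih.2, ?_⟩
      rw [dihedralSeq, ih.1, ih.2]; ring
  exact (H k).1

/-- A kernel element agrees with `dihedralSeq (a 0) (a 1)` along casts of naturals. -/
lemma dihedral_ker_seq (n : ℕ) (hn : 3 ≤ n) [NeZero n] (a : ZMod n → ℤ)
    (ha : a ∈ LinearMap.ker (dihedralD n)) (k : ℕ) :
    a (k : ZMod n) = dihedralSeq (a 0) (a 1) k := by
  rw [dihedral_mem_ker_iff n hn] at ha
  have H : ∀ k : ℕ, a (k : ZMod n) = dihedralSeq (a 0) (a 1) k ∧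
      a ((k + 1 : ℕ) : ZMod n) = dihedralSeq (a 0) (a 1) (k + 1) := by
    intro k
    induction k with
    | zero => exact ⟨by simp [dihedralSeq], by simp [dihedralSeq]⟩
    | succ m ih =>
      refine ⟨ih.2, ?_⟩
      have hrec := ha ((m + 1 : ℕ) : ZMod n)
      have e1 : ((m + 1 : ℕ) : ZMod n) - 1 = ((m : ℕ) : ZMod n) := by push_cast; ring
      have e2 : ((m + 1 : ℕ) : ZMod n) + 1 = ((m + 2 : ℕ) : ZMod n) := by push_cast; ring
      rw [e1, e2] at hrec
      have e3 : dihedralSeq (a 0) (a 1) (m + 2)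
          = dihedralSeq (a 0) (a 1) (m + 1) - dihedralSeq (a 0) (a 1) m := rfl
      rw [e3, ← ih.1, ← ih.2]
      linarith
  exact (H k).1

lemma dihedral_ker_inj (n : ℕ) (hn : 3 ≤ n) [NeZero n] (a : ZMod n → ℤ)
    (ha : a ∈ LinearMap.ker (dihedralD n)) (h0 : a 0 = 0) (h1 : a 1 = 0) : a = 0 := by
  funext i
  have := dihedral_ker_seq n hn a ha i.val
  rw [ZMod.natCast_zmod_val, h0, h1, dihedralSeq_zero] at this
  simpa using this

/-- `a ↦ (a_0, a_1)` is an injective group homomorphism from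
`ker(1 - A_n^t)` to `ℤ²`; it is an isomorphism onto `ℤ²` when `6 ∣ n`, and
`ker(1 - A_n^t) = 0` when `6 ∤ n`. -/
theorem dihedral_kernel_map (n : ℕ) (hn : 3 ≤ n) [NeZero n] :
    (∀ a b : LinearMap.ker (dihedralD n),
      (((a + b : LinearMap.ker (dihedralD n)) : ZMod n → ℤ) 0,
        ((a + b : LinearMap.ker (dihedralD n)) : ZMod n → ℤ) 1) =
      ((a : ZMod n → ℤ) 0, (a : ZMod n → ℤ) 1) +
        ((b : ZMod n → ℤ) 0, (b : ZMod n → ℤ) 1)) ∧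
    Function.Injective (fun a : LinearMap.ker (dihedralD n) =>
      ((a : ZMod n → ℤ) 0, (a : ZMod n → ℤ) 1)) ∧
    (6 ∣ n → Function.Bijective (fun a : LinearMap.ker (dihedralD n) =>
      ((a : ZMod n → ℤ) 0, (a : ZMod n → ℤ) 1))) ∧
    (¬ 6 ∣ n → LinearMap.ker (dihedralD n) = ⊥) := by
  have hinj : Function.Injective (fun a : LinearMap.ker (dihedralD n) =>
      ((a : ZMod n → ℤ) 0, (a : ZMod n → ℤ) 1)) := by
    intro a b hab
    have h0 : (a : ZMod n → ℤ) 0 = (b : ZMod n → ℤ) 0 := congrArg Prod.fst hab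
    have h1 : (a : ZMod n → ℤ) 1 = (b : ZMod n → ℤ) 1 := congrArg Prod.snd hab
    have hk : ((a : ZMod n → ℤ) - (b : ZMod n → ℤ)) ∈ LinearMap.ker (dihedralD n) :=
      Submodule.sub_mem _ a.2 b.2
    have := dihedral_ker_inj n hn _ hk (by simp [h0]) (by simp [h1])
    ext i
    have := congrFun this i
    simp only [Pi.sub_apply, Pi.zero_apply, sub_eq_zero] at this
    exact this
  refine ⟨?_, hinj, ?_, ?_⟩
  · intro a b; simp
  · -- 6 ∣ n : bijective
    intro h6
    refine ⟨hinj, ?_⟩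
    rintro ⟨x, y⟩
    -- build the kernel element
    set a : ZMod n → ℤ := fun i => dihedralSeq x y i.val with ha
    have hval1 : (1 : ZMod n).val = 1 := by
      rw [ZMod.val_one_eq_one_mod]; exact Nat.mod_eq_of_lt (by omega)
    have hadd1 : ∀ i : ZMod n, (i + 1).val % 6 = (i.val + 1) % 6 := by
      intro i
      rw [ZMod.val_add, hval1, Nat.mod_mod_of_dvd _ h6]
    have hmem : a ∈ LinearMap.ker (dihedralD n) := by
      rw [dihedral_mem_ker_iff n hn]
      intro i
      have hsub1 : (i - 1).val % 6 = (i.val + 5) % 6 := by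
        have := hadd1 (i - 1)
        rw [sub_add_cancel] at this
        omega
      have g1 : a (i - 1) = dihedralSeq x y ((i.val + 5) % 6) := by
        rw [ha]; simp only []
        rw [dihedralSeq_mod, hsub1]
      have g2 : a (i + 1) = dihedralSeq x y ((i.val + 1) % 6) := by
        rw [ha]; simp only []
        rw [dihedralSeq_mod, hadd1]
      have g0 : a i = dihedralSeq x y (i.val % 6) := by
        rw [ha]; simp only []
        rw [dihedralSeq_mod]
      rw [g0, g1, g2]
      have hm : i.val % 6 < 6 := Nat.mod_lt _ (by norm_num)
      have e5 : (i.val + 5) % 6 = (i.val % 6 + 5) % 6 := by omega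
      have e1 : (i.val + 1) % 6 = (i.val % 6 + 1) % 6 := by omega
      rw [e5, e1]
      set m := i.val % 6 with hmdef
      interval_cases m <;> simp [dihedralSeq] <;> ring
    refine ⟨⟨a, hmem⟩, ?_⟩
    have h0 : a 0 = x := by
      show dihedralSeq x y (0 : ZMod n).val = x
      rw [ZMod.val_zero]; rfl
    have h1 : a 1 = y := by
      show dihedralSeq x y (1 : ZMod n).val = y
      rw [hval1]; rfl
    simp [h0, h1]
  · -- ¬ 6 ∣ n : kernel trivial
    intro h6
    rw [eq_bot_iff]
    intro a ha
    have hseq := dihedral_ker_seq n hn a ha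
    have hn0 : a ((n : ℕ) : ZMod n) = a 0 := by rw [ZMod.natCast_self]
    have hn1 : a ((n + 1 : ℕ) : ZMod n) = a 1 := by
      rw [Nat.cast_add, ZMod.natCast_self, Nat.cast_one, zero_add]
    have c0 : dihedralSeq (a 0) (a 1) (n % 6) = a 0 := by
      rw [← dihedralSeq_mod, ← hseq n, hn0]
    have c1 : dihedralSeq (a 0) (a 1) ((n % 6 + 1) % 6) = a 1 := by
      have : (n + 1) % 6 = (n % 6 + 1) % 6 := by omega
      rw [← this, ← dihedralSeq_mod, ← hseq (n + 1), hn1]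
    have hr : n % 6 < 6 := Nat.mod_lt _ (by norm_num)
    have hrne : n % 6 ≠ 0 := fun h => h6 (Nat.dvd_of_mod_eq_zero h)
    have h00 : a 0 = 0 ∧ a 1 = 0 := by
      set r := n % 6 with hrdef
      interval_cases r <;> simp [dihedralSeq] at c0 c1 <;> constructor <;> omega
    have := dihedral_ker_inj n hn a ha h00.1 h00.2
    simp [Submodule.mem_bot, this]
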